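/- Let B be a Rota–Baxter operator of nonzero weight λ on a Lie algebra g over a field. Define r₊, r₋ : g × Dual(g) → g × Dual(g) by r₊(x,ξ) := (λ⁻¹(Bx + λx), −λ⁻¹·ξ∘B) and r₋(x,ξ) := (λ⁻¹Bx, −λ⁻¹(λξ + ξ∘B)), and the coadjoint-type bilinear operation 𝔞(x,ξ)(y,η) := (⁅x,y⁆ − ad*_y ξ, ad*_x η) on g × Dual(g). Then for all a,b ∈ g × Dual(g): 𝔞(r₊ a)(b) − 𝔞(r₋ b)(a) = λ⁻¹ ⁅a,b⁆_{B̃}; moreover ⁅(x,ξ),(y,η)⁆_{B̃} = (⁅x,y⁆_B, ρ_B(x)η − ρ_B(y)ξ), where ⁅x,y⁆_B := ⁅Bx,y⁆ + ⁅x,By⁆ + λ⁅x,y⁆ and ρ_B(x)ξ := ad*_{Bx}ξ − ad*_x(ξ∘B). In particular, λ⁻¹·id is a Lie algebra isomorphism from the dual Lie algebra induced by the r-matrix r_B onto the descendent Lie algebra g_B ⋉_{ρ_B} Dual(g). -/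
import Mathlib


variable {K : Type*} [Field K] {g : Type*} [LieRing g] [LieAlgebra K g]

/-- Coadjoint action `ad*_x ξ = −ξ ∘ (ad x)` on the dual space. -/
noncomputable def coad (x : g) (ξ : Module.Dual K g) : Module.Dual K g :=
  -(ξ ∘ₗ (LieAlgebra.ad K g x : g →ₗ[K] g))

/-- The semidirect bracket `⁅(x,ξ),(y,η)⁆ = (⁅x,y⁆, ad*_x η − ad*_y ξ)` on `g × Dual g`. -/
noncomputable def sdBracket (a b : g × Module.Dual K g) : g × Module.Dual K g :=
  (⁅a.1, b.1⁆, coad a.1 b.2 - coad b.1 a.2)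

/-- The operator `B̃(x,ξ) = (Bx, −lam ξ − ξ∘B)` on `g × Dual g`. -/
noncomputable def Btilde (lam : K) (B : g →ₗ[K] g) (a : g × Module.Dual K g) :
    g × Module.Dual K g :=
  (B a.1, -(lam • a.2) - a.2 ∘ₗ B)

/-- The descendent bracket `⁅a,b⁆_{B̃} = ⁅B̃a,b⁆ + ⁅a,B̃b⁆ + lam•⁅a,b⁆`. -/
noncomputable def descBracket (lam : K) (B : g →ₗ[K] g) (a b : g × Module.Dual K g) :
    g × Module.Dual K g :=
  sdBracket (Btilde lam B a) b + sdBracket a (Btilde lam B b) + lam • sdBracket a b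

/-- `r₊(x,ξ) = (lam⁻¹(Bx + lam x), −lam⁻¹ ξ∘B)`. -/
noncomputable def rplus (lam : K) (B : g →ₗ[K] g) (a : g × Module.Dual K g) :
    g × Module.Dual K g :=
  (lam⁻¹ • (B a.1 + lam • a.1), -(lam⁻¹ • (a.2 ∘ₗ B)))

/-- `r₋(x,ξ) = (lam⁻¹ Bx, −lam⁻¹(lam ξ + ξ∘B))`. -/
noncomputable def rminus (lam : K) (B : g →ₗ[K] g) (a : g × Module.Dual K g) :
    g × Module.Dual K g :=
  (lam⁻¹ • B a.1, -(lam⁻¹ • (lam • a.2 + a.2 ∘ₗ B)))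

/-- The coadjoint-type bilinear operation `𝔞(x,ξ)(y,η)` of `g ⋉ Dual g` on its dual,
identified with `g × Dual g`:  `𝔞𝔡*_x y = ⁅x,y⁆`, `𝔞𝔡*_x η = ad*_x η`,
`𝔞𝔡*_ξ y = −ad*_y ξ`, `𝔞𝔡*_ξ η = 0`. -/
noncomputable def acoad (a b : g × Module.Dual K g) : g × Module.Dual K g :=
  (⁅a.1, b.1⁆, coad a.1 b.2 - coad b.1 a.2)

/-- `ρ_B(x)ξ = ad*_{Bx} ξ − ad*_x (ξ∘B)`. -/
noncomputable def rhoB (B : g →ₗ[K] g) (x : g) (ξ : Module.Dual K g) : Module.Dual K g :=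
  coad (B x) ξ - coad x (ξ ∘ₗ B)

/-- For a Rota–Baxter operator `B` of nonzero weight `lam` on `g`:
`𝔞(r₊ a)(b) − 𝔞(r₋ b)(a) = lam⁻¹ • ⁅a,b⁆_{B̃}` for all `a, b ∈ g × Dual g`, and
`⁅(x,ξ),(y,η)⁆_{B̃} = (⁅x,y⁆_B, ρ_B(x)η − ρ_B(y)ξ)`.  In particular `lam⁻¹·id` is a
Lie algebra isomorphism from the dual Lie algebra induced by the `r`-matrix `r_B`
onto the descendent Lie algebra `g_B ⋉_{ρ_B} Dual g`. -/
theorem stmt9 (lam : K) (hlam : lam ≠ 0) (B : g →ₗ[K] g)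
    (hB : ∀ x y : g, ⁅B x, B y⁆ = B (⁅B x, y⁆ + ⁅x, B y⁆ + lam • ⁅x, y⁆)) :
    (∀ a b : g × Module.Dual K g,
      acoad (rplus lam B a) b - acoad (rminus lam B b) a =
        lam⁻¹ • descBracket lam B a b) ∧
    (∀ (x y : g) (ξ η : Module.Dual K g),
      descBracket lam B (x, ξ) (y, η) =
        (⁅B x, y⁆ + ⁅x, B y⁆ + lam • ⁅x, y⁆, rhoB B x η - rhoB B y ξ)) := by
  constructor
  · intro a b
    refine Prod.ext ?_ ?_
    · simp only [acoad, rplus, rminus, descBracket, sdBracket, Btilde, Prod.fst_sub,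
        Prod.fst_add, Prod.smul_fst, smul_sub, smul_add, lie_smul, smul_lie]
      simp only [smul_smul, inv_mul_cancel₀ hlam, one_smul]
      rw [add_lie, smul_lie, ← lie_skew (B b.1) a.1, smul_neg]
      abel
    · ext v
      simp only [acoad, rplus, rminus, descBracket, sdBracket, Btilde, coad, Prod.snd_sub,
        Prod.snd_add, Prod.smul_snd, LinearMap.sub_apply, LinearMap.add_apply,
        LinearMap.smul_apply, LinearMap.neg_apply, LinearMap.comp_apply,
        LieAlgebra.ad_apply, smul_eq_mul, lie_smul, smul_lie, map_add, map_smul, map_neg,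
        map_sub, neg_lie, lie_neg]
      field_simp
      ring
  · intro x y ξ η
    refine Prod.ext ?_ ?_
    · simp [descBracket, sdBracket, Btilde]
    · ext v
      simp only [descBracket, sdBracket, Btilde, coad, rhoB, Prod.snd_add, Prod.smul_snd,
        LinearMap.sub_apply, LinearMap.add_apply, LinearMap.smul_apply, LinearMap.neg_apply,
        LinearMap.comp_apply, LieAlgebra.ad_apply, smul_eq_mul, map_add, map_smul, map_neg,
        map_sub]
      ring
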